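/- Let R be a commutative ring. If S ⊆ Spec(R) is closed in the constructible topology and stable under generalization (i.e., p ∈ S and q ⊆ p implies q ∈ S), then S is an intersection of quasi-compact open subsets of Spec(R); equivalently, the complement of S is a Thomason subset. -/

import Mathlib

/-- A subset is Thomason if it is a union of closed sets each of which has
quasi-compact (open) complement. -/
def IsThomason {X : Type*} [TopologicalSpace X] (Y : Set X) : Prop :=
  ∃ S : Set (Set X), (∀ Z ∈ S, IsClosed Z ∧ IsCompact Zᶜ) ∧ Y = ⋃₀ S

/-- The constructible topology on the prime spectrum: generated by the
quasi-compact Zariski-open sets and their complements. -/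
def constructibleTop (R : Type*) [CommRing R] : TopologicalSpace (PrimeSpectrum R) :=
  TopologicalSpace.generateFrom
    ({U | IsOpen U ∧ IsCompact U} ∪ {V | IsOpen Vᶜ ∧ IsCompact Vᶜ})

open TopologicalSpace Set PrimeSpectrum

section aux

variable {R : Type*} [CommRing R]

/-- The "limit" prime ideal of an ultrafilter on the prime spectrum. -/
def ultraIdeal (𝒰 : Ultrafilter (PrimeSpectrum R)) : Ideal R where
  carrier := {f | {q : PrimeSpectrum R | f ∈ q.asIdeal} ∈ 𝒰}
  zero_mem' := by
    have h : {q : PrimeSpectrum R | (0 : R) ∈ q.asIdeal} = Set.univ := by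
      ext q; simp
    simp only [Set.mem_setOf_eq, h]
    exact Filter.univ_mem
  add_mem' := by
    intro a b ha hb
    exact Filter.mem_of_superset (Filter.inter_mem ha hb) fun q hq => Ideal.add_mem _ hq.1 hq.2
  smul_mem' := by
    intro r f hf
    exact Filter.mem_of_superset hf fun q hq => Ideal.mul_mem_left _ r hq

lemma ultraIdeal_isPrime (𝒰 : Ultrafilter (PrimeSpectrum R)) : (ultraIdeal 𝒰).IsPrime := by
  constructor
  · intro h
    have h1 : (1 : R) ∈ ultraIdeal 𝒰 := h ▸ Submodule.mem_top
    have : {q : PrimeSpectrum R | (1 : R) ∈ q.asIdeal} = (∅ : Set (PrimeSpectrum R)) := by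
      ext q
      simp only [Set.mem_setOf_eq, Set.mem_empty_iff_false, iff_false]
      exact fun hq => q.isPrime.ne_top (Ideal.eq_top_of_isUnit_mem _ hq isUnit_one)
    have h2 : {q : PrimeSpectrum R | (1 : R) ∈ q.asIdeal} ∈ 𝒰 := h1
    rw [this] at h2
    exact Filter.empty_notMem (𝒰 : Filter (PrimeSpectrum R)) h2
  · intro a b hab
    have h : {q : PrimeSpectrum R | a * b ∈ q.asIdeal} =
        {q : PrimeSpectrum R | a ∈ q.asIdeal} ∪ {q : PrimeSpectrum R | b ∈ q.asIdeal} := by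
      ext q
      constructor
      · exact fun h => q.isPrime.mem_or_mem h
      · rintro (h | h)
        · exact Ideal.mul_mem_right _ _ h
        · exact Ideal.mul_mem_left _ _ h
    have hab' : {q : PrimeSpectrum R | a ∈ q.asIdeal} ∪ {q : PrimeSpectrum R | b ∈ q.asIdeal} ∈ 𝒰 := by
      rw [← h]; exact hab
    exact (Ultrafilter.union_mem_iff).mp hab'

/-- The limit point of an ultrafilter in the constructible topology. -/
def ultraPoint (𝒰 : Ultrafilter (PrimeSpectrum R)) : PrimeSpectrum R :=
  ⟨ultraIdeal 𝒰, ultraIdeal_isPrime 𝒰⟩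

lemma mem_ultraIdeal_iff (𝒰 : Ultrafilter (PrimeSpectrum R)) (f : R) :
    f ∈ ultraIdeal 𝒰 ↔ {q : PrimeSpectrum R | f ∈ q.asIdeal} ∈ 𝒰 := Iff.rfl

lemma compl_basicOpen_eq (f : R) :
    (↑(basicOpen f) : Set (PrimeSpectrum R))ᶜ = {q : PrimeSpectrum R | f ∈ q.asIdeal} := by
  ext q
  simp [PrimeSpectrum.mem_basicOpen]

lemma ultra_le_nhds (𝒰 : Ultrafilter (PrimeSpectrum R)) :
    (𝒰 : Filter (PrimeSpectrum R)) ≤ @nhds _ (constructibleTop R) (ultraPoint 𝒰) := by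
  show (𝒰 : Filter (PrimeSpectrum R)) ≤
    @nhds _ (TopologicalSpace.generateFrom
      ({U | IsOpen U ∧ IsCompact U} ∪ {V | IsOpen Vᶜ ∧ IsCompact Vᶜ})) (ultraPoint 𝒰)
  rw [TopologicalSpace.nhds_generateFrom]
  refine le_iInf fun s => le_iInf fun hs => Filter.le_principal_iff.mpr ?_
  obtain ⟨hps, hU | hV⟩ := hs
  · -- s is a quasi-compact open set containing the limit point
    obtain ⟨b, ⟨f, rfl⟩, hpb, hbs⟩ :=
      isTopologicalBasis_basic_opens.exists_subset_of_mem_open hps hU.1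
    have hf : f ∉ ultraIdeal 𝒰 := by
      exact hpb
    have : {q : PrimeSpectrum R | f ∈ q.asIdeal} ∉ 𝒰 := hf
    have hb𝒰 : (↑(basicOpen f) : Set (PrimeSpectrum R)) ∈ 𝒰 := by
      have := (Ultrafilter.compl_mem_iff_notMem (s := {q : PrimeSpectrum R | f ∈ q.asIdeal})
        (f := 𝒰)).mpr this
      rwa [← compl_basicOpen_eq, compl_compl] at this
    exact Filter.mem_of_superset hb𝒰 hbs
  · -- sᶜ is a quasi-compact open set, limit point ∈ s
    set V := sᶜ with hVdef
    obtain ⟨hVopen, hVcomp⟩ := hV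
    -- cover V by basic opens contained in V
    have hcov : V ⊆ ⋃ i : {f : R // (↑(basicOpen f) : Set (PrimeSpectrum R)) ⊆ V},
        (↑(basicOpen i.1) : Set (PrimeSpectrum R)) := by
      intro x hx
      obtain ⟨b, ⟨f, rfl⟩, hxb, hbV⟩ :=
        isTopologicalBasis_basic_opens.exists_subset_of_mem_open hx hVopen
      exact Set.mem_iUnion.mpr ⟨⟨f, hbV⟩, hxb⟩
    obtain ⟨t, ht⟩ := hVcomp.elim_finite_subcover
      (fun i : {f : R // (↑(basicOpen f) : Set (PrimeSpectrum R)) ⊆ V} =>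
        (↑(basicOpen i.1) : Set (PrimeSpectrum R)))
      (fun i => (basicOpen i.1).2) hcov
    have hmem : ∀ i ∈ t, (↑(basicOpen i.1) : Set (PrimeSpectrum R))ᶜ ∈ 𝒰 := by
      intro i _
      rw [compl_basicOpen_eq]
      have hp : i.1 ∈ ultraIdeal 𝒰 := by
        have hnot : ultraPoint 𝒰 ∉ (↑(basicOpen i.1) : Set (PrimeSpectrum R)) :=
          fun h => (hVdef ▸ i.2 h : ultraPoint 𝒰 ∈ sᶜ) hps
        by_contra hc
        exact hnot hc
      exact hp
    have hint : ⋂ i ∈ t, (↑(basicOpen i.1) : Set (PrimeSpectrum R))ᶜ ∈ 𝒰 :=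
      (Filter.biInter_mem t.finite_toSet).mpr hmem
    refine Filter.mem_of_superset hint ?_
    intro x hx
    by_contra hxs
    have hxV : x ∈ V := hxs
    obtain ⟨i, hit, hxi⟩ := Set.mem_iUnion₂.mp (ht hxV)
    exact (Set.mem_iInter₂.mp hx i hit) hxi

lemma isCompact_constructible {S : Set (PrimeSpectrum R)}
    (hS : @IsClosed (PrimeSpectrum R) (constructibleTop R) S) :
    @IsCompact (PrimeSpectrum R) (constructibleTop R) S := by
  letI := constructibleTop R
  rw [isCompact_iff_ultrafilter_le_nhds]
  intro 𝒰 h𝒰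
  refine ⟨ultraPoint 𝒰, ?_, ultra_le_nhds 𝒰⟩
  have hmem : ultraPoint 𝒰 ∈ closure S :=
    mem_closure_iff_ultrafilter.mpr
      ⟨𝒰, Filter.le_principal_iff.mp h𝒰, ultra_le_nhds 𝒰⟩
  rwa [hS.closure_eq] at hmem

lemma basicOpen_constructibleOpen (f : R) :
    @IsOpen (PrimeSpectrum R) (constructibleTop R) (↑(basicOpen f)) :=
  TopologicalSpace.isOpen_generateFrom_of_mem
    (Or.inl ⟨(basicOpen f).2, isCompact_basicOpen f⟩)

end aux

theorem proconstructible_genStable_is_intersection_qc_opens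
    {R : Type*} [CommRing R] (S : Set (PrimeSpectrum R))
    (hS : @IsClosed (PrimeSpectrum R) (constructibleTop R) S)
    (hgen : ∀ p ∈ S, ∀ q : PrimeSpectrum R, q.asIdeal ≤ p.asIdeal → q ∈ S) :
    (∃ F : Set (Set (PrimeSpectrum R)),
      (∀ U ∈ F, IsOpen U ∧ IsCompact U) ∧ S = ⋂₀ F) ∧
    IsThomason Sᶜ := by
  -- key claim: every point outside S is separated from S by a quasi-compact open ⊇ S
  have key : ∀ p ∉ S, ∃ U : Set (PrimeSpectrum R),
      IsOpen U ∧ IsCompact U ∧ S ⊆ U ∧ p ∉ U := by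
    intro p hp
    have sep : ∀ q ∈ S, ∃ f : R, f ∈ p.asIdeal ∧ q ∈ basicOpen f := by
      intro q hq
      have hle : ¬ p.asIdeal ≤ q.asIdeal := fun h => hp (hgen q hq p h)
      obtain ⟨f, hf1, hf2⟩ := SetLike.not_le_iff_exists.mp hle
      exact ⟨f, hf1, by simpa [PrimeSpectrum.mem_basicOpen] using hf2⟩
    choose! f hf1 hf2 using sep
    have hcomp := isCompact_constructible hS
    have hcov : S ⊆ ⋃ i : S, (↑(basicOpen (f i.1)) : Set (PrimeSpectrum R)) := by
      intro q hq
      exact Set.mem_iUnion.mpr ⟨⟨q, hq⟩, hf2 q hq⟩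
    obtain ⟨t, ht⟩ := @IsCompact.elim_finite_subcover (PrimeSpectrum R) (constructibleTop R) S
      S hcomp (fun i : S => (↑(basicOpen (f i.1)) : Set (PrimeSpectrum R)))
      (fun i : S => basicOpen_constructibleOpen (f i.1)) hcov
    refine ⟨⋃ i ∈ t, (↑(basicOpen (f i.1)) : Set (PrimeSpectrum R)), ?_, ?_, ht, ?_⟩
    · exact isOpen_biUnion fun i _ => (basicOpen (f i.1)).2
    · exact t.finite_toSet.isCompact_biUnion fun i _ => isCompact_basicOpen _
    · intro hpU
      obtain ⟨i, _, hpi⟩ := Set.mem_iUnion₂.mp hpU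
      have h1 : f i.1 ∈ p.asIdeal := hf1 i.1 i.2
      have h2 : f i.1 ∉ p.asIdeal := by simpa [PrimeSpectrum.mem_basicOpen] using hpi
      exact h2 h1
  set F : Set (Set (PrimeSpectrum R)) := {U | IsOpen U ∧ IsCompact U ∧ S ⊆ U} with hF
  have hSF : S = ⋂₀ F := by
    apply Set.Subset.antisymm
    · intro q hq U hU
      exact hU.2.2 hq
    · intro q hq
      by_contra hqS
      obtain ⟨U, hUo, hUc, hSU, hqU⟩ := key q hqS
      exact hqU (hq U ⟨hUo, hUc, hSU⟩)
  constructor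
  · exact ⟨F, fun U hU => ⟨hU.1, hU.2.1⟩, hSF⟩
  · refine ⟨compl '' F, ?_, ?_⟩
    · rintro Z ⟨U, hU, rfl⟩
      exact ⟨hU.1.isClosed_compl, by rw [compl_compl]; exact hU.2.1⟩
    · rw [hSF, Set.compl_sInter]
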